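/- Let W : Ω₁ × ℝ^ℓ → [0, ∞) and W' : Ω₂ × ℝ^ℓ → [0, ∞) be jointly measurable random fields on complete probability spaces (Ω₁, F₁, P₁) and (Ω₂, F₂, P₂), each satisfying ∫_{[−m, m]^ℓ} E[W(t)] λ(dt) ∈ (0, ∞) and ∫_{[−m, m]^ℓ} E[W'(t)] λ(dt) ∈ (0, ∞) for every positive integer m. If W and W' have the same finite-dimensional distributions (for every n and every t₁, …, t_n ∈ ℝ^ℓ, the random vectors (W(t₁), …, W(t_n)) and (W'(t₁), …, W'(t_n)) have the same law), then the [0, ∞]-valued random variables ∫_{ℝ^ℓ} W(t) λ(dt) and ∫_{ℝ^ℓ} W'(t) λ(dt) have the same distribution. In particular, for every h ∈ ℝ^ℓ, ∫_{ℝ^ℓ} W(t − h) λ(dt) has the same distribution as ∫_{ℝ^ℓ} W(t) λ(dt). -/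

import Mathlib

open MeasureTheory ProbabilityTheory Filter
open scoped ENNReal Topology

noncomputable section

abbrev Tsp (l : ℕ) : Type := EuclideanSpace ℝ (Fin l)
abbrev Vsp (d : ℕ) : Type := EuclideanSpace ℝ (Fin d)
abbrev RPath (l d : ℕ) : Type := Tsp l → Vsp d

/-- The shift `B^h f = f(· − h)`. -/
def shift {l d : ℕ} (h : Tsp l) (f : RPath l d) : RPath l d := fun t => f (t - h)

/-- Joint measurability of a random field. -/
def JointlyMeasurable {Ω : Type*} [MeasurableSpace Ω] {l d : ℕ} (Z : Ω → RPath l d) : Prop :=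
  Measurable fun p : Ω × Tsp l => Z p.1 p.2

/-- `F ∈ H_β`: product-measurable and `β`-homogeneous maps on path space. -/
def Hom (l d : ℕ) (β : ℝ) (F : RPath l d → ℝ≥0∞) : Prop :=
  Measurable F ∧
  ∀ c : ℝ, 0 < c → ∀ f : RPath l d,
    F (fun t => c • f t) = ENNReal.ofReal (c ^ β) * F f

/-- Condition (★). -/
def StarC {Ω : Type*} [MeasurableSpace Ω] (P : Measure Ω) {l d : ℕ} (α : ℝ)
    (Z : Ω → RPath l d) : Prop :=
  JointlyMeasurable Z ∧
  (∫⁻ ω, ENNReal.ofReal (‖Z ω 0‖ ^ α) ∂P) = 1 ∧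
  ∃ T₀ : Set (Tsp l), T₀.Countable ∧ P {ω | ∃ t ∈ T₀, 0 < ‖Z ω t‖} = 1

/-- `Z̃ ∈ C[Z]`. -/
def MemC {Ω Ω' : Type*} [MeasurableSpace Ω] [MeasurableSpace Ω']
    (P : Measure Ω) (P' : Measure Ω') {l d : ℕ} (α : ℝ)
    (Z : Ω → RPath l d) (ZT : Ω' → RPath l d) : Prop :=
  StarC P' α ZT ∧
  ∀ F : RPath l d → ℝ≥0∞, Hom l d α F → ∀ h : Tsp l,
    (∫⁻ ω, F (Z ω) ∂P) = ∫⁻ ω', F (shift h (ZT ω')) ∂P'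

/-- `S_γ(f) = ∫ ‖f(t)‖^α γ(t) dt`. -/
def Sgam {l d : ℕ} (α : ℝ) (γ : Tsp l → ℝ) (f : RPath l d) : ℝ≥0∞ :=
  ∫⁻ t, ENNReal.ofReal (‖f t‖ ^ α * γ t)

/-- `S(f) = ∫ ‖f(t)‖^α dt`. -/
def Sfun {l d : ℕ} (α : ℝ) (f : RPath l d) : ℝ≥0∞ :=
  ∫⁻ t, ENNReal.ofReal (‖f t‖ ^ α)

/-- The local random field `Z̃/‖Z̃(0)‖` (set to `0` where `‖Z̃(0)‖ = 0`). -/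
def localRF {Ω : Type*} {l d : ℕ} (ZT : Ω → RPath l d) (ω : Ω) : RPath l d :=
  fun t => if ‖ZT ω 0‖ = 0 then 0 else ‖ZT ω 0‖⁻¹ • ZT ω t

/-- The tilted measure `P̂`. -/
def tilted {Ω : Type*} [MeasurableSpace Ω] (P : Measure Ω) {l d : ℕ} (α : ℝ)
    (ZT : Ω → RPath l d) : Measure Ω :=
  P.withDensity fun ω => ENNReal.ofReal (‖ZT ω 0‖ ^ α)



set_option linter.unusedSectionVars false
set_option linter.unusedVariables false

namespace Stmt19aux

variable {l : ℕ}

def boxS (l m : ℕ) : Set (Tsp l) := {t | ∀ i, |t i| ≤ (m:ℝ)}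

def regS (l m : ℕ) : Set (Tsp l × ℝ) := boxS l m ×ˢ Set.Ioo 0 (m:ℝ)

lemma measurableSet_boxS (m : ℕ) : MeasurableSet (boxS l m) := by
  have : boxS l m = ⋂ i, (fun t : Tsp l => t i) ⁻¹' {x | |x| ≤ (m:ℝ)} := by
    ext t; simp [boxS, Set.mem_iInter]
  rw [this]
  exact MeasurableSet.iInter fun i => ((measurable_pi_apply i).comp (WithLp.measurable_ofLp 2 _))
    ((isClosed_le (by continuity) continuous_const).measurableSet)

lemma measurableSet_regS (m : ℕ) : MeasurableSet (regS l m) :=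
  (measurableSet_boxS m).prod measurableSet_Ioo

lemma boxS_volume_lt_top (m : ℕ) : volume (boxS l m) < ∞ := by
  have hsub : boxS l m ⊆ Metric.closedBall (0 : Tsp l) (((l:ℝ)+1) * ((m:ℝ)+1)) := by
    intro t ht
    simp only [Metric.mem_closedBall, dist_zero_right]
    rw [EuclideanSpace.norm_eq]
    rw [show ((l:ℝ)+1) * ((m:ℝ)+1) = Real.sqrt ((((l:ℝ)+1) * ((m:ℝ)+1))^2) by
      rw [Real.sqrt_sq (by positivity)]]
    apply Real.sqrt_le_sqrt
    calc ∑ i, ‖t i‖ ^ 2 ≤ ∑ _i : Fin l, ((m:ℝ)+1)^2 := by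
          apply Finset.sum_le_sum
          intro i _
          have h2 : |t i| ≤ (m:ℝ)+1 := le_trans (ht i) (by linarith)
          calc ‖t i‖^2 = |t i|^2 := by rw [Real.norm_eq_abs]
            _ ≤ ((m:ℝ)+1)^2 := by nlinarith [abs_nonneg (t i)]
      _ = l * ((m:ℝ)+1)^2 := by simp [Finset.sum_const, nsmul_eq_mul]
      _ ≤ (((l:ℝ)+1) * ((m:ℝ)+1))^2 := by nlinarith [Nat.cast_nonneg (α := ℝ) l, Nat.cast_nonneg (α := ℝ) m]
  exact lt_of_le_of_lt (measure_mono hsub) (isCompact_closedBall _ _).measure_lt_top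

lemma regS_volume_lt_top (m : ℕ) : volume (regS l m) < ∞ := by
  rw [show (volume : Measure (Tsp l × ℝ)) = (volume : Measure (Tsp l)).prod volume from rfl]
  rw [regS, Measure.prod_prod]
  exact ENNReal.mul_lt_top (boxS_volume_lt_top m) (by simp [Real.volume_Ioo])

lemma regS_mono : Monotone (fun m => (regS l m : Set (Tsp l × ℝ))) := by
  intro a b hab
  refine Set.prod_mono (fun t ht i => le_trans (ht i) (Nat.cast_le.mpr hab))
    (Set.Ioo_subset_Ioo le_rfl (by exact_mod_cast hab))

lemma iUnion_regS : (⋃ m, regS l m) = (Set.univ : Set (Tsp l)) ×ˢ Set.Ioi (0:ℝ) := by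
  ext ⟨t, y⟩
  simp only [Set.mem_iUnion, regS, Set.mem_prod, Set.mem_Ioo, boxS, Set.mem_setOf_eq,
    Set.mem_univ, true_and, Set.mem_Ioi]
  constructor
  · rintro ⟨m, _, hy, _⟩; exact hy
  · intro hy
    refine ⟨max (Finset.univ.sup (fun i => ⌈|t i|⌉₊)) ⌈y⌉₊ + 1, fun i => ?_, hy, ?_⟩
    · have h1 : |t i| ≤ (⌈|t i|⌉₊ : ℝ) := Nat.le_ceil _
      have h2 : ⌈|t i|⌉₊ ≤ max (Finset.univ.sup (fun i => ⌈|t i|⌉₊)) ⌈y⌉₊ + 1 :=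
        Nat.le_succ_of_le (le_trans (Finset.le_sup (f := fun i => ⌈|t i|⌉₊) (Finset.mem_univ i)) (le_max_left _ _))
      exact le_trans h1 (by exact_mod_cast h2)
    · have h1 : y ≤ (⌈y⌉₊ : ℝ) := Nat.le_ceil _
      have h2 : (⌈y⌉₊ : ℝ) < ((max (Finset.univ.sup (fun i => ⌈|t i|⌉₊)) ⌈y⌉₊ + 1 : ℕ) : ℝ) := by
        exact_mod_cast Nat.lt_succ_of_le (le_max_right _ _)
      exact lt_of_le_of_lt h1 h2


section RF
variable {Ω : Type*} [MeasurableSpace Ω]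

/-- region strictly below the graph of `W ω`. -/
def Sgr (W : Ω → Tsp l → ℝ) (ω : Ω) : Set (Tsp l × ℝ) := {p | p.2 < W ω p.1}

def AQ (W : Ω → Tsp l → ℝ) (m : ℕ) (ω : Ω) : ℝ≥0∞ := volume (Sgr W ω ∩ regS l m)

def YQ (W : Ω → Tsp l → ℝ) (m : ℕ) (ω : Ω) : ℝ≥0∞ := volume (regS l m \ Sgr W ω)

variable {W : Ω → Tsp l → ℝ}

lemma measurableSet_graph (hWm : Measurable fun p : Ω × Tsp l => W p.1 p.2) :
    MeasurableSet {q : Ω × (Tsp l × ℝ) | q.2.2 < W q.1 q.2.1} := by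
  have h1 : Measurable fun q : Ω × (Tsp l × ℝ) => q.2.2 := measurable_snd.snd
  have h2 : Measurable fun q : Ω × (Tsp l × ℝ) => W q.1 q.2.1 :=
    hWm.comp (measurable_fst.prodMk measurable_snd.fst)
  exact measurableSet_lt h1 h2

lemma measurable_sgr_section (hWm : Measurable fun p : Ω × Tsp l => W p.1 p.2) (ω : Ω) : MeasurableSet (Sgr W ω) := by
  have h2 : Measurable fun p : Tsp l × ℝ => W ω p.1 :=
    (hWm.comp (measurable_prodMk_left)).comp measurable_fst
  exact measurableSet_lt measurable_snd h2

lemma AQ_measurable (hWm : Measurable fun p : Ω × Tsp l => W p.1 p.2) (m : ℕ) : Measurable (AQ W m) := by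
  have hD : MeasurableSet {q : Ω × (Tsp l × ℝ) | q.2.2 < W q.1 q.2.1 ∧ q.2 ∈ regS l m} :=
    (measurableSet_graph hWm).inter (measurable_snd (measurableSet_regS m))
  have := measurable_measure_prodMk_left (ν := (volume : Measure (Tsp l × ℝ))) hD
  convert this using 2
  rfl

lemma YQ_measurable (hWm : Measurable fun p : Ω × Tsp l => W p.1 p.2) (m : ℕ) : Measurable (YQ W m) := by
  have hD : MeasurableSet {q : Ω × (Tsp l × ℝ) | q.2 ∈ regS l m ∧ ¬ q.2.2 < W q.1 q.2.1} :=
    (measurable_snd (measurableSet_regS m)).inter (measurableSet_graph hWm).compl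
  have := measurable_measure_prodMk_left (ν := (volume : Measure (Tsp l × ℝ))) hD
  convert this using 2
  rfl

lemma YQ_le (m : ℕ) (ω : Ω) : YQ W m ω ≤ volume (regS l m) :=
  measure_mono Set.diff_subset

lemma AQ_add_YQ (hWm : Measurable fun p : Ω × Tsp l => W p.1 p.2) (m : ℕ) (ω : Ω) : AQ W m ω + YQ W m ω = volume (regS l m) := by
  rw [AQ, YQ, Set.inter_comm]
  exact measure_inter_add_diff _ (measurable_sgr_section hWm ω)

lemma AQ_mono (ω : Ω) : Monotone fun m => AQ W m ω := fun a b hab =>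
  measure_mono (Set.inter_subset_inter le_rfl (regS_mono hab))

lemma iSup_AQ (hWm : Measurable fun p : Ω × Tsp l => W p.1 p.2) (ω : Ω) : ⨆ m, AQ W m ω = ∫⁻ t, ENNReal.ofReal (W ω t) := by
  have hdir : Directed (· ⊆ ·) fun m => Sgr W ω ∩ regS l m := by
    intro a b
    exact ⟨max a b, Set.inter_subset_inter le_rfl (regS_mono (le_max_left a b)),
      Set.inter_subset_inter le_rfl (regS_mono (le_max_right a b))⟩
  calc ⨆ m, AQ W m ω = volume (⋃ m, Sgr W ω ∩ regS l m) :=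
        hdir.measure_iUnion.symm
    _ = volume (Sgr W ω ∩ ⋃ m, regS l m) := by rw [Set.inter_iUnion]
    _ = volume {p : Tsp l × ℝ | 0 < p.2 ∧ p.2 < W ω p.1} := by
        rw [iUnion_regS]
        congr 1
        ext ⟨t, y⟩
        simp only [Sgr, Set.mem_inter_iff, Set.mem_setOf_eq, Set.mem_prod, Set.mem_univ,
          true_and, Set.mem_Ioi]
        tauto
    _ = ∫⁻ t, ENNReal.ofReal (W ω t) := by
        have hms : MeasurableSet {p : Tsp l × ℝ | 0 < p.2 ∧ p.2 < W ω p.1} := by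
          have h2 : Measurable fun p : Tsp l × ℝ => W ω p.1 :=
            (hWm.comp (measurable_prodMk_left)).comp measurable_fst
          exact (measurableSet_lt measurable_const measurable_snd).inter
            (measurableSet_lt measurable_snd h2)
        rw [show (volume : Measure (Tsp l × ℝ)) = (volume : Measure (Tsp l)).prod volume from rfl]
        rw [Measure.prod_apply hms]
        congr 1
        ext t
        have : (Prod.mk t ⁻¹' {p : Tsp l × ℝ | 0 < p.2 ∧ p.2 < W ω p.1}) = Set.Ioo 0 (W ω t) := by
          ext y; simp [Set.mem_Ioo]
        rw [this, Real.volume_Ioo, sub_zero]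


lemma lintegral_YQ_pow {P : Measure Ω} [IsFiniteMeasure P]
    (hWm : Measurable fun p : Ω × Tsp l => W p.1 p.2) (n m : ℕ) :
    ∫⁻ ω, (YQ W m ω)^n ∂P =
    ∫⁻ q, (Measure.map (fun ω (i : Fin n) => W ω ((q i).1)) P)
        {x : Fin n → ℝ | ∀ i, x i ≤ (q i).2}
      ∂(Measure.pi fun _ : Fin n => (volume : Measure (Tsp l × ℝ)).restrict (regS l m)) := by
  set μm := (volume : Measure (Tsp l × ℝ)).restrict (regS l m) with hμm
  haveI : IsFiniteMeasure μm := ⟨by rw [Measure.restrict_apply_univ]; exact regS_volume_lt_top m⟩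
  have hWsec : ∀ ω : Ω, Measurable fun p : Tsp l × ℝ => W ω p.1 := fun ω =>
    (hWm.comp (measurable_prodMk_left)).comp measurable_fst
  have hTmeas : ∀ ω : Ω, MeasurableSet {p : Tsp l × ℝ | W ω p.1 ≤ p.2} := fun ω =>
    measurableSet_le (hWsec ω) measurable_snd
  have hT : ∀ ω, YQ W m ω = μm {p : Tsp l × ℝ | W ω p.1 ≤ p.2} := by
    intro ω
    rw [hμm, Measure.restrict_apply (hTmeas ω), YQ]
    congr 1
    ext p
    simp only [Set.mem_inter_iff, Set.mem_setOf_eq, Set.mem_diff, Sgr, not_lt]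
    tauto
  set DD : Set (Ω × (Fin n → Tsp l × ℝ)) :=
    {r | ∀ i, W r.1 ((r.2 i).1) ≤ (r.2 i).2} with hDDdef
  have hDD : MeasurableSet DD := by
    have : DD = ⋂ i, {r : Ω × (Fin n → Tsp l × ℝ) | W r.1 ((r.2 i).1) ≤ (r.2 i).2} := by
      ext r; simp [hDDdef, Set.mem_iInter]
    rw [this]
    refine MeasurableSet.iInter fun i => ?_
    have h1 : Measurable fun r : Ω × (Fin n → Tsp l × ℝ) => W r.1 ((r.2 i).1) :=
      hWm.comp (measurable_fst.prodMk (((measurable_pi_apply i).comp measurable_snd).fst))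
    exact measurableSet_le h1 (((measurable_pi_apply i).comp measurable_snd).snd)
  have key : ∀ ω, (YQ W m ω)^n = (Measure.pi fun _ : Fin n => μm) (Prod.mk ω ⁻¹' DD) := by
    intro ω
    have hpre : Prod.mk ω ⁻¹' DD = Set.pi Set.univ (fun _ : Fin n => {p : Tsp l × ℝ | W ω p.1 ≤ p.2}) := by
      ext q
      simp [hDDdef, Set.mem_pi]
    rw [hpre, Measure.pi_pi, hT, Finset.prod_const, Finset.card_univ, Fintype.card_fin]
  calc ∫⁻ ω, (YQ W m ω)^n ∂P
      = ∫⁻ ω, (Measure.pi fun _ : Fin n => μm) (Prod.mk ω ⁻¹' DD) ∂P := by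
        exact lintegral_congr key
    _ = (P.prod (Measure.pi fun _ : Fin n => μm)) DD := (Measure.prod_apply hDD).symm
    _ = ∫⁻ q, P ((fun ω => (ω, q)) ⁻¹' DD) ∂(Measure.pi fun _ : Fin n => μm) :=
        Measure.prod_apply_symm hDD
    _ = ∫⁻ q, (Measure.map (fun ω (i : Fin n) => W ω ((q i).1)) P)
          {x : Fin n → ℝ | ∀ i, x i ≤ (q i).2} ∂(Measure.pi fun _ : Fin n => μm) := by
        refine lintegral_congr fun q => ?_
        have hvec : Measurable fun ω (i : Fin n) => W ω ((q i).1) :=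
          measurable_pi_lambda _ fun i => hWm.comp (measurable_id.prodMk measurable_const)
        have hset : MeasurableSet {x : Fin n → ℝ | ∀ i, x i ≤ (q i).2} := by
          have : {x : Fin n → ℝ | ∀ i, x i ≤ (q i).2} = ⋂ i, (fun x : Fin n → ℝ => x i) ⁻¹' Set.Iic ((q i).2) := by
            ext x; simp [Set.mem_iInter]
          rw [this]
          exact MeasurableSet.iInter fun i => (measurable_pi_apply i) measurableSet_Iic
        rw [Measure.map_apply hvec hset]
        congr 1

end RF

lemma moment_eq {Ω₁ Ω₂ : Type*} [MeasurableSpace Ω₁] [MeasurableSpace Ω₂]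
    {P₁ : Measure Ω₁} [IsFiniteMeasure P₁] {P₂ : Measure Ω₂} [IsFiniteMeasure P₂]
    {W : Ω₁ → Tsp l → ℝ} {W' : Ω₂ → Tsp l → ℝ}
    (hWm : Measurable fun p : Ω₁ × Tsp l => W p.1 p.2)
    (hW'm : Measurable fun p : Ω₂ × Tsp l => W' p.1 p.2)
    (hfidis : ∀ (n : ℕ) (t : Fin n → Tsp l),
      Measure.map (fun ω (i : Fin n) => W ω (t i)) P₁ =
      Measure.map (fun ω (i : Fin n) => W' ω (t i)) P₂) (n m : ℕ) :
    ∫⁻ ω, (YQ W m ω)^n ∂P₁ = ∫⁻ ω, (YQ W' m ω)^n ∂P₂ := by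
  rw [lintegral_YQ_pow hWm n m, lintegral_YQ_pow hW'm n m]
  refine lintegral_congr fun q => ?_
  rw [hfidis n (fun i => (q i).1)]



lemma supported_ae {ρ : Measure ℝ} {K : ℝ} (hs : ρ (Set.Icc 0 K)ᶜ = 0) :
    ∀ᵐ x ∂ρ, x ∈ Set.Icc 0 K := by
  rw [ae_iff]
  have : {x : ℝ | ¬ x ∈ Set.Icc 0 K} = (Set.Icc 0 K)ᶜ := rfl
  rw [this, hs]

lemma integrable_of_cont {ρ : Measure ℝ} [IsProbabilityMeasure ρ] {K : ℝ}
    (hs : ρ (Set.Icc 0 K)ᶜ = 0) {g : ℝ → ℝ} (hg : Continuous g) :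
    Integrable g ρ := by
  obtain ⟨C, hC⟩ := isCompact_Icc.exists_bound_of_continuousOn (hg.continuousOn (s := Set.Icc 0 K))
  have hb : ∀ᵐ x ∂ρ, ‖g x‖ ≤ C := (supported_ae hs).mono fun x hx => hC x hx
  exact (memLp_top_of_bound hg.aestronglyMeasurable C hb).integrable le_top

lemma integral_norm_bound {ρ : Measure ℝ} [IsProbabilityMeasure ρ] {K : ℝ}
    (hs : ρ (Set.Icc 0 K)ᶜ = 0) {g : ℝ → ℝ} (hg : Continuous g) {C : ℝ}
    (hC : ∀ x ∈ Set.Icc 0 K, ‖g x‖ ≤ C) : ‖∫ x, g x ∂ρ‖ ≤ C := by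
  have hb : ∀ᵐ x ∂ρ, ‖g x‖ ≤ C := (supported_ae hs).mono fun x hx => hC x hx
  calc ‖∫ x, g x ∂ρ‖ ≤ C * (ρ Set.univ).toReal := norm_integral_le_of_norm_le_const hb
    _ = C := by simp

lemma integral_poly_eq {ρ ρ' : Measure ℝ} [IsProbabilityMeasure ρ] [IsProbabilityMeasure ρ']
    {K : ℝ} (hs : ρ (Set.Icc 0 K)ᶜ = 0) (hs' : ρ' (Set.Icc 0 K)ᶜ = 0)
    (hmom : ∀ n : ℕ, ∫ x, x^n ∂ρ = ∫ x, x^n ∂ρ') (p : Polynomial ℝ) :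
    ∫ x, p.eval x ∂ρ = ∫ x, p.eval x ∂ρ' := by
  have hrep : ∀ x : ℝ, p.eval x = ∑ n ∈ Finset.range (p.natDegree + 1), p.coeff n * x^n := by
    intro x
    rw [Polynomial.eval_eq_sum_range]
  have hint : ∀ (σ : Measure ℝ) (_ : IsProbabilityMeasure σ) (_ : σ (Set.Icc 0 K)ᶜ = 0),
      ∫ x, p.eval x ∂σ = ∑ n ∈ Finset.range (p.natDegree + 1), p.coeff n * ∫ x, x^n ∂σ := by
    intro σ hσ hσs
    calc ∫ x, p.eval x ∂σ
        = ∫ x, ∑ n ∈ Finset.range (p.natDegree + 1), p.coeff n * x^n ∂σ := by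
          exact integral_congr_ae (Eventually.of_forall hrep)
      _ = ∑ n ∈ Finset.range (p.natDegree + 1), ∫ x, p.coeff n * x^n ∂σ := by
          refine integral_finset_sum _ fun n _ => ?_
          exact (integrable_of_cont hσs (continuous_pow n)).const_mul _
      _ = ∑ n ∈ Finset.range (p.natDegree + 1), p.coeff n * ∫ x, x^n ∂σ := by
          refine Finset.sum_congr rfl fun n _ => ?_
          simpa using integral_smul (p.coeff n) (fun x : ℝ => x^n) (μ := σ)
  rw [hint ρ ‹_› hs, hint ρ' ‹_› hs']
  exact Finset.sum_congr rfl fun n _ => by rw [hmom n]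

lemma integral_cont_eq {ρ ρ' : Measure ℝ} [IsProbabilityMeasure ρ] [IsProbabilityMeasure ρ']
    {K : ℝ} (hs : ρ (Set.Icc 0 K)ᶜ = 0) (hs' : ρ' (Set.Icc 0 K)ᶜ = 0)
    (hmom : ∀ n : ℕ, ∫ x, x^n ∂ρ = ∫ x, x^n ∂ρ') {g : ℝ → ℝ} (hg : Continuous g) :
    ∫ x, g x ∂ρ = ∫ x, g x ∂ρ' := by
  have key : ∀ ε : ℝ, 0 < ε → |(∫ x, g x ∂ρ) - ∫ x, g x ∂ρ'| ≤ 2 * ε := by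
    intro ε hε
    obtain ⟨p, hp⟩ := exists_polynomial_near_of_continuousOn 0 K g hg.continuousOn ε hε
    have hgp : Continuous fun x => g x - p.eval x := hg.sub p.continuous_aeval
    have hbound : ∀ x ∈ Set.Icc 0 K, ‖g x - p.eval x‖ ≤ ε := by
      intro x hx
      rw [Real.norm_eq_abs, abs_sub_comm]
      exact (hp x hx).le
    have h1 : ‖∫ x, (g x - p.eval x) ∂ρ‖ ≤ ε := integral_norm_bound hs hgp hbound
    have h2 : ‖∫ x, (g x - p.eval x) ∂ρ'‖ ≤ ε := integral_norm_bound hs' hgp hbound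
    have e1 : ∫ x, (g x - p.eval x) ∂ρ = (∫ x, g x ∂ρ) - ∫ x, p.eval x ∂ρ :=
      integral_sub (integrable_of_cont hs hg) (integrable_of_cont hs p.continuous_aeval)
    have e2 : ∫ x, (g x - p.eval x) ∂ρ' = (∫ x, g x ∂ρ') - ∫ x, p.eval x ∂ρ' :=
      integral_sub (integrable_of_cont hs' hg) (integrable_of_cont hs' p.continuous_aeval)
    have e3 : ∫ x, p.eval x ∂ρ = ∫ x, p.eval x ∂ρ' := integral_poly_eq hs hs' hmom p
    rw [e1, Real.norm_eq_abs] at h1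
    rw [e2, Real.norm_eq_abs] at h2
    have : (∫ x, g x ∂ρ) - ∫ x, g x ∂ρ' =
        ((∫ x, g x ∂ρ) - ∫ x, p.eval x ∂ρ) - ((∫ x, g x ∂ρ') - ∫ x, p.eval x ∂ρ') := by
      rw [e3]; ring
    rw [this]
    calc |((∫ x, g x ∂ρ) - ∫ x, p.eval x ∂ρ) - ((∫ x, g x ∂ρ') - ∫ x, p.eval x ∂ρ')|
        ≤ |(∫ x, g x ∂ρ) - ∫ x, p.eval x ∂ρ| + |(∫ x, g x ∂ρ') - ∫ x, p.eval x ∂ρ'| :=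
          abs_sub _ _
      _ ≤ 2 * ε := by linarith
  by_contra hne
  have habs : 0 < |(∫ x, g x ∂ρ) - ∫ x, g x ∂ρ'| := by
    rw [abs_pos]
    intro h0
    exact hne (by linarith [sub_eq_zero.mp h0])
  have := key (|(∫ x, g x ∂ρ) - ∫ x, g x ∂ρ'| / 4) (by linarith)
  linarith

lemma Ici_eq_of_moments {ρ ρ' : Measure ℝ} [IsProbabilityMeasure ρ] [IsProbabilityMeasure ρ']
    {K : ℝ} (hs : ρ (Set.Icc 0 K)ᶜ = 0) (hs' : ρ' (Set.Icc 0 K)ᶜ = 0)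
    (hmom : ∀ n : ℕ, ∫ x, x^n ∂ρ = ∫ x, x^n ∂ρ') (b : ℝ) :
    ρ (Set.Ici b) = ρ' (Set.Ici b) := by
  set gk : ℕ → ℝ → ℝ := fun k x => max 0 (min 1 ((k+1 : ℝ) * (x - b) + 1)) with hgk
  have hgkcont : ∀ k, Continuous (gk k) := by
    intro k
    apply continuous_const.max
    exact continuous_const.min (by continuity)
  have hgkbd : ∀ k x, ‖gk k x‖ ≤ 1 := by
    intro k x
    rw [Real.norm_eq_abs, abs_le]
    constructor
    · exact le_trans (by norm_num) (le_max_left _ _)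
    · exact max_le (by norm_num) (min_le_left _ _)
  have hlim : ∀ x : ℝ, Tendsto (fun k => gk k x) atTop (𝓝 (Set.indicator (Set.Ici b) 1 x)) := by
    intro x
    rcases le_or_gt b x with hbx | hxb
    · have hone : ∀ k, gk k x = 1 := by
        intro k
        have h1 : (1:ℝ) ≤ (k+1 : ℝ) * (x - b) + 1 := by nlinarith [Nat.cast_nonneg (α := ℝ) k]
        show max 0 (min 1 ((k+1 : ℝ) * (x - b) + 1)) = 1
        rw [min_eq_left h1, max_eq_right (by norm_num : (0:ℝ) ≤ 1)]
      have hind : (Set.indicator (Set.Ici b) 1 x : ℝ) = 1 := by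
        simp [Set.indicator, Set.mem_Ici, hbx]
      rw [hind]
      simp only [hone]
      exact tendsto_const_nhds
    · have hind : (Set.indicator (Set.Ici b) 1 x : ℝ) = 0 :=
        Set.indicator_of_notMem (by simp [hxb.not_ge]) _
      rw [hind]
      have : ∀ᶠ k : ℕ in atTop, gk k x = 0 := by
        obtain ⟨N, hN⟩ := exists_nat_gt (1 / (b - x))
        filter_upwards [eventually_ge_atTop N] with k hk
        have hbx : 0 < b - x := by linarith
        have h1 : (k+1 : ℝ) * (x - b) + 1 ≤ 0 := by
          have : (1 / (b - x)) < (k+1 : ℝ) := by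
            have : (N : ℝ) ≤ (k : ℝ) := by exact_mod_cast hk
            linarith
          have h2 : 1 < (k+1 : ℝ) * (b - x) := by
            rw [div_lt_iff₀ hbx] at this
            linarith
          nlinarith
        have h2 : min 1 ((k+1 : ℝ) * (x - b) + 1) ≤ 0 := le_trans (min_le_right _ _) h1
        show max 0 (min 1 ((k+1 : ℝ) * (x - b) + 1)) = 0
        rw [max_eq_left h2]
      exact Tendsto.congr' (this.mono fun k hk => hk.symm) tendsto_const_nhds
  have hconv : ∀ (σ : Measure ℝ) (_ : IsProbabilityMeasure σ),
      Tendsto (fun k => ∫ x, gk k x ∂σ) atTop (𝓝 ((σ (Set.Ici b)).toReal)) := by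
    intro σ hσ
    have := tendsto_integral_of_dominated_convergence (μ := σ)
      (F := fun k x => gk k x) (f := Set.indicator (Set.Ici b) 1)
      (bound := fun _ => (1:ℝ))
      (fun k => (hgkcont k).aestronglyMeasurable)
      (integrable_const 1)
      (fun k => Eventually.of_forall (hgkbd k))
      (Eventually.of_forall hlim)
    rwa [integral_indicator_one measurableSet_Ici] at this
  have heqk : ∀ k, ∫ x, gk k x ∂ρ = ∫ x, gk k x ∂ρ' := fun k =>
    integral_cont_eq hs hs' hmom (hgkcont k)
  have h12 : Tendsto (fun k => ∫ x, gk k x ∂ρ) atTop (𝓝 ((ρ' (Set.Ici b)).toReal)) := by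
    rw [show (fun k => ∫ x, gk k x ∂ρ) = fun k => ∫ x, gk k x ∂ρ' from funext heqk]
    exact hconv ρ' ‹_›
  have := tendsto_nhds_unique (hconv ρ ‹_›) h12
  exact (ENNReal.toReal_eq_toReal_iff' (measure_ne_top ρ _) (measure_ne_top ρ' _)).mp this


end Stmt19aux

open Stmt19aux in
/-- one-sided reduction: the law of the full integral at `Iic a` as a limit of AQ events. -/
theorem stmt19_main {Ω₁ Ω₂ : Type*} [MeasurableSpace Ω₁] [MeasurableSpace Ω₂]
    (P₁ : Measure Ω₁) [IsProbabilityMeasure P₁]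
    (P₂ : Measure Ω₂) [IsProbabilityMeasure P₂]
    {l : ℕ}
    (W : Ω₁ → Tsp l → ℝ) (hWm : Measurable fun p : Ω₁ × Tsp l => W p.1 p.2)
    (W' : Ω₂ → Tsp l → ℝ) (hW'm : Measurable fun p : Ω₂ × Tsp l => W' p.1 p.2)
    (hfidis : ∀ (n : ℕ) (t : Fin n → Tsp l),
      Measure.map (fun ω (i : Fin n) => W ω (t i)) P₁ =
      Measure.map (fun ω (i : Fin n) => W' ω (t i)) P₂) :
    Measure.map (fun ω => ∫⁻ t, ENNReal.ofReal (W ω t)) P₁ =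
      Measure.map (fun ω => ∫⁻ t, ENNReal.ofReal (W' ω t)) P₂ := by
  have hXm : Measurable fun ω => ∫⁻ t, ENNReal.ofReal (W ω t) :=
    Measurable.lintegral_prod_right' (f := fun p : Ω₁ × Tsp l => ENNReal.ofReal (W p.1 p.2))
      (ENNReal.measurable_ofReal.comp hWm)
  have hX'm : Measurable fun ω => ∫⁻ t, ENNReal.ofReal (W' ω t) :=
    Measurable.lintegral_prod_right' (f := fun p : Ω₂ × Tsp l => ENNReal.ofReal (W' p.1 p.2))
      (ENNReal.measurable_ofReal.comp hW'm)
  haveI : IsProbabilityMeasure (Measure.map (fun ω => ∫⁻ t, ENNReal.ofReal (W ω t)) P₁) :=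
    Measure.isProbabilityMeasure_map hXm.aemeasurable
  haveI : IsProbabilityMeasure (Measure.map (fun ω => ∫⁻ t, ENNReal.ofReal (W' ω t)) P₂) :=
    Measure.isProbabilityMeasure_map hX'm.aemeasurable
  apply Measure.ext_of_Iic
  intro a
  rw [Measure.map_apply hXm measurableSet_Iic, Measure.map_apply hX'm measurableSet_Iic]
  by_cases ha : a = ∞
  · subst ha
    have h1 : (fun ω => ∫⁻ t, ENNReal.ofReal (W ω t)) ⁻¹' Set.Iic ∞ = Set.univ := by
      ext ω; simp
    have h2 : (fun ω => ∫⁻ t, ENNReal.ofReal (W' ω t)) ⁻¹' Set.Iic ∞ = Set.univ := by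
      ext ω; simp
    rw [h1, h2, measure_univ, measure_univ]
  -- finite a
  have key : ∀ m : ℕ, P₁ {ω | AQ W m ω ≤ a} = P₂ {ω | AQ W' m ω ≤ a} := by
    intro m
    set c : ℝ≥0∞ := volume (regS l m) with hc
    have hcne : c ≠ ∞ := (regS_volume_lt_top m).ne
    set cr : ℝ := c.toReal with hcr
    set ar : ℝ := a.toReal with har
    have hYmeas : Measurable fun ω : Ω₁ => (YQ W m ω).toReal :=
      (YQ_measurable hWm m).ennreal_toReal
    have hY'meas : Measurable fun ω : Ω₂ => (YQ W' m ω).toReal :=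
      (YQ_measurable hW'm m).ennreal_toReal
    set ρ : Measure ℝ := Measure.map (fun ω => (YQ W m ω).toReal) P₁ with hρ
    set ρ' : Measure ℝ := Measure.map (fun ω => (YQ W' m ω).toReal) P₂ with hρ'
    haveI : IsProbabilityMeasure ρ := Measure.isProbabilityMeasure_map hYmeas.aemeasurable
    haveI : IsProbabilityMeasure ρ' := Measure.isProbabilityMeasure_map hY'meas.aemeasurable
    have hmemIcc : ∀ ω : Ω₁, (YQ W m ω).toReal ∈ Set.Icc 0 cr := fun ω =>
      ⟨ENNReal.toReal_nonneg, ENNReal.toReal_mono hcne (YQ_le m ω)⟩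
    have hmemIcc' : ∀ ω : Ω₂, (YQ W' m ω).toReal ∈ Set.Icc 0 cr := fun ω =>
      ⟨ENNReal.toReal_nonneg, ENNReal.toReal_mono hcne (YQ_le m ω)⟩
    have hsupp : ρ (Set.Icc 0 cr)ᶜ = 0 := by
      rw [hρ, Measure.map_apply hYmeas measurableSet_Icc.compl]
      have : (fun ω : Ω₁ => (YQ W m ω).toReal) ⁻¹' (Set.Icc 0 cr)ᶜ = ∅ := by
        ext ω; simp only [Set.mem_preimage, Set.mem_compl_iff, Set.mem_empty_iff_false,
          iff_false, not_not]
        exact hmemIcc ω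
      rw [this, measure_empty]
    have hsupp' : ρ' (Set.Icc 0 cr)ᶜ = 0 := by
      rw [hρ', Measure.map_apply hY'meas measurableSet_Icc.compl]
      have : (fun ω : Ω₂ => (YQ W' m ω).toReal) ⁻¹' (Set.Icc 0 cr)ᶜ = ∅ := by
        ext ω; simp only [Set.mem_preimage, Set.mem_compl_iff, Set.mem_empty_iff_false,
          iff_false, not_not]
        exact hmemIcc' ω
      rw [this, measure_empty]
    have hmom : ∀ n : ℕ, ∫ x, x^n ∂ρ = ∫ x, x^n ∂ρ' := by
      intro n
      have hm1 : ∫ x, x^n ∂ρ = ∫ ω, ((YQ W m ω).toReal)^n ∂P₁ :=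
        integral_map hYmeas.aemeasurable (continuous_pow n).aestronglyMeasurable
      have hm2 : ∫ x, x^n ∂ρ' = ∫ ω, ((YQ W' m ω).toReal)^n ∂P₂ :=
        integral_map hY'meas.aemeasurable (continuous_pow n).aestronglyMeasurable
      have e1 : ∫ ω, ((YQ W m ω).toReal)^n ∂P₁ = (∫⁻ ω, (YQ W m ω)^n ∂P₁).toReal := by
        rw [← integral_toReal (((YQ_measurable hWm m).pow_const n).aemeasurable)
          (Eventually.of_forall fun ω =>
            ENNReal.pow_lt_top (lt_of_le_of_lt (YQ_le m ω) (regS_volume_lt_top m)))]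
        exact integral_congr_ae (Eventually.of_forall fun ω => (ENNReal.toReal_pow _ n).symm)
      have e2 : ∫ ω, ((YQ W' m ω).toReal)^n ∂P₂ = (∫⁻ ω, (YQ W' m ω)^n ∂P₂).toReal := by
        rw [← integral_toReal (((YQ_measurable hW'm m).pow_const n).aemeasurable)
          (Eventually.of_forall fun ω =>
            ENNReal.pow_lt_top (lt_of_le_of_lt (YQ_le m ω) (regS_volume_lt_top m)))]
        exact integral_congr_ae (Eventually.of_forall fun ω => (ENNReal.toReal_pow _ n).symm)
      rw [hm1, hm2, e1, e2, moment_eq hWm hW'm hfidis n m]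
    have hsetEq1 : {ω | AQ W m ω ≤ a} = (fun ω => (YQ W m ω).toReal) ⁻¹' Set.Ici (cr - ar) := by
      ext ω
      have hsum := AQ_add_YQ hWm m ω
      have hAne : AQ W m ω ≠ ∞ := by
        refine ne_top_of_le_ne_top hcne ?_
        calc AQ W m ω ≤ AQ W m ω + YQ W m ω := le_self_add
          _ = c := hsum
      have hYne : YQ W m ω ≠ ∞ := ne_top_of_le_ne_top hcne (YQ_le m ω)
      have hsumr : (AQ W m ω).toReal + (YQ W m ω).toReal = cr := by
        rw [← ENNReal.toReal_add hAne hYne, hsum]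
      simp only [Set.mem_setOf_eq, Set.mem_preimage, Set.mem_Ici]
      constructor
      · intro hle
        have : (AQ W m ω).toReal ≤ ar := ENNReal.toReal_mono ha hle
        linarith
      · intro hge
        have h2 : (AQ W m ω).toReal ≤ ar := by linarith
        exact (ENNReal.toReal_le_toReal hAne ha).mp h2
    have hsetEq2 : {ω | AQ W' m ω ≤ a} = (fun ω => (YQ W' m ω).toReal) ⁻¹' Set.Ici (cr - ar) := by
      ext ω
      have hsum := AQ_add_YQ hW'm m ω
      have hAne : AQ W' m ω ≠ ∞ := by
        refine ne_top_of_le_ne_top hcne ?_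
        calc AQ W' m ω ≤ AQ W' m ω + YQ W' m ω := le_self_add
          _ = c := hsum
      have hYne : YQ W' m ω ≠ ∞ := ne_top_of_le_ne_top hcne (YQ_le m ω)
      have hsumr : (AQ W' m ω).toReal + (YQ W' m ω).toReal = cr := by
        rw [← ENNReal.toReal_add hAne hYne, hsum]
      simp only [Set.mem_setOf_eq, Set.mem_preimage, Set.mem_Ici]
      constructor
      · intro hle
        have : (AQ W' m ω).toReal ≤ ar := ENNReal.toReal_mono ha hle
        linarith
      · intro hge
        have h2 : (AQ W' m ω).toReal ≤ ar := by linarith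
        exact (ENNReal.toReal_le_toReal hAne ha).mp h2
    rw [hsetEq1, hsetEq2,
      ← Measure.map_apply hYmeas measurableSet_Ici,
      ← Measure.map_apply hY'meas measurableSet_Ici]
    exact Ici_eq_of_moments hsupp hsupp' hmom (cr - ar)
  -- pass to the limit in m
  have hint1 : (fun ω => ∫⁻ t, ENNReal.ofReal (W ω t)) ⁻¹' Set.Iic a
      = ⋂ m, {ω | AQ W m ω ≤ a} := by
    ext ω
    simp only [Set.mem_preimage, Set.mem_Iic, Set.mem_iInter, Set.mem_setOf_eq]
    rw [← iSup_AQ hWm ω, iSup_le_iff]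
  have hint2 : (fun ω => ∫⁻ t, ENNReal.ofReal (W' ω t)) ⁻¹' Set.Iic a
      = ⋂ m, {ω | AQ W' m ω ≤ a} := by
    ext ω
    simp only [Set.mem_preimage, Set.mem_Iic, Set.mem_iInter, Set.mem_setOf_eq]
    rw [← iSup_AQ hW'm ω, iSup_le_iff]
  rw [hint1, hint2]
  have hanti1 : Antitone fun m => {ω | AQ W m ω ≤ a} := by
    intro m m' hmm ω hω
    exact le_trans (AQ_mono ω hmm) hω
  have hanti2 : Antitone fun m => {ω | AQ W' m ω ≤ a} := by
    intro m m' hmm ω hω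
    exact le_trans (AQ_mono ω hmm) hω
  have ht1 : Filter.Tendsto (fun m => P₁ {ω | AQ W m ω ≤ a}) atTop
      (𝓝 (P₁ (⋂ m, {ω | AQ W m ω ≤ a}))) := by
    refine tendsto_measure_iInter_atTop
      (fun m => ((AQ_measurable hWm m) measurableSet_Iic).nullMeasurableSet) hanti1
      ⟨0, measure_ne_top _ _⟩
  have ht2 : Filter.Tendsto (fun m => P₂ {ω | AQ W' m ω ≤ a}) atTop
      (𝓝 (P₂ (⋂ m, {ω | AQ W' m ω ≤ a}))) := by
    refine tendsto_measure_iInter_atTop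
      (fun m => ((AQ_measurable hW'm m) measurableSet_Iic).nullMeasurableSet) hanti2
      ⟨0, measure_ne_top _ _⟩
  have := funext key
  rw [show (fun m => P₁ {ω | AQ W m ω ≤ a}) = fun m => P₂ {ω | AQ W' m ω ≤ a} from funext key] at ht1
  exact tendsto_nhds_unique ht1 ht2


/-- the law of the pathwise integral `∫ W(t) dt` depends only on the
finite-dimensional distributions of `W`; in particular it is shift-invariant. -/
theorem stmt19 {Ω₁ Ω₂ : Type*} [MeasurableSpace Ω₁] [MeasurableSpace Ω₂]
    (P₁ : Measure Ω₁) [IsProbabilityMeasure P₁] (hP₁c : P₁.IsComplete)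
    (P₂ : Measure Ω₂) [IsProbabilityMeasure P₂] (hP₂c : P₂.IsComplete)
    {l : ℕ} (hl : 1 ≤ l)
    (W : Ω₁ → Tsp l → ℝ) (hWm : Measurable fun p : Ω₁ × Tsp l => W p.1 p.2)
    (hWnn : ∀ ω t, 0 ≤ W ω t)
    (W' : Ω₂ → Tsp l → ℝ) (hW'm : Measurable fun p : Ω₂ × Tsp l => W' p.1 p.2)
    (hW'nn : ∀ ω t, 0 ≤ W' ω t)
    (hint : ∀ m : ℕ, 0 < m →
      0 < (∫⁻ t in {t : Tsp l | ∀ i, |t i| ≤ (m : ℝ)}, ∫⁻ ω, ENNReal.ofReal (W ω t) ∂P₁) ∧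
      (∫⁻ t in {t : Tsp l | ∀ i, |t i| ≤ (m : ℝ)}, ∫⁻ ω, ENNReal.ofReal (W ω t) ∂P₁) < ⊤)
    (hint' : ∀ m : ℕ, 0 < m →
      0 < (∫⁻ t in {t : Tsp l | ∀ i, |t i| ≤ (m : ℝ)}, ∫⁻ ω, ENNReal.ofReal (W' ω t) ∂P₂) ∧
      (∫⁻ t in {t : Tsp l | ∀ i, |t i| ≤ (m : ℝ)}, ∫⁻ ω, ENNReal.ofReal (W' ω t) ∂P₂) < ⊤)
    (hfidis : ∀ (n : ℕ) (t : Fin n → Tsp l),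
      Measure.map (fun ω (i : Fin n) => W ω (t i)) P₁ =
      Measure.map (fun ω (i : Fin n) => W' ω (t i)) P₂) :
    Measure.map (fun ω => ∫⁻ t, ENNReal.ofReal (W ω t)) P₁ =
      Measure.map (fun ω => ∫⁻ t, ENNReal.ofReal (W' ω t)) P₂ ∧
    ∀ h : Tsp l,
      Measure.map (fun ω => ∫⁻ t, ENNReal.ofReal (W ω (t - h))) P₁ =
        Measure.map (fun ω => ∫⁻ t, ENNReal.ofReal (W ω t)) P₁ := by
  constructor
  · exact stmt19_main P₁ P₂ W hWm W' hW'm hfidis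
  · intro h
    have : (fun ω => ∫⁻ t, ENNReal.ofReal (W ω (t - h)))
        = fun ω => ∫⁻ t, ENNReal.ofReal (W ω t) :=
      funext fun ω => lintegral_sub_right_eq_self (fun t => ENNReal.ofReal (W ω t)) h
    rw [this]
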